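/- arXiv:1409.0125 — 4 statements merged into one kernel-verified Lean document; each statement's English description precedes it below -/
import Mathlib

section
/- If P is any pattern group of depth d and Q = G_P|_{X^[d]} is the group of restrictions to X^[d] of elements of G_P, then Q ≤ P, G_Q = G_P, and Q is minimal; consequently every self-similar group of finite type given by patterns of depth d is represented by a unique minimal pattern group of depth d. -/
open List

/-- The group of automorphisms of the rooted tree `X*` (vertices = words over `X`,
root = empty word, edges `(v, vx)`), as a subgroup of the permutations of `List X`. -/
def treeAut (X : Type*) : Subgroup (Equiv.Perm (List X)) where
  carrier := {f | f [] = [] ∧ ∀ (v : List X) (x : X), ∃ y : X, f (v ++ [x]) = f v ++ [y]}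
  one_mem' := ⟨rfl, fun _ x => ⟨x, rfl⟩⟩
  mul_mem' := by
    rintro f g ⟨hf0, hf⟩ ⟨hg0, hg⟩
    refine ⟨by simp [Equiv.Perm.mul_apply, hg0, hf0], fun v x => ?_⟩
    obtain ⟨y, hy⟩ := hg v x
    obtain ⟨z, hz⟩ := hf (g v) y
    exact ⟨z, by simp [Equiv.Perm.mul_apply, hy, hz]⟩
  inv_mem' := by
    rintro f ⟨hf0, hf⟩
    have h0 : f⁻¹ [] = ([] : List _) := by
      have h : f⁻¹ (f []) = [] := by simp
      rwa [hf0] at h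
    refine ⟨h0, fun v x => ?_⟩
    rcases List.eq_nil_or_concat (f⁻¹ (v ++ [x])) with h | ⟨w, z, hw⟩
    · exfalso
      have h1 : v ++ [x] = f ([] : List _) := by
        have := congrArg (fun t => f t) h
        simpa using this
      rw [hf0] at h1
      simp at h1
    · rw [List.concat_eq_append] at hw
      obtain ⟨y, hy⟩ := hf w z
      have h2 : f w ++ [y] = v ++ [x] := by
        rw [← hy]
        have := congrArg (fun t => f t) hw
        simpa using this.symm
      have h3 := (List.append_inj' h2 rfl).1
      have h4 : w = f⁻¹ v := by rw [← h3]; simp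
      exact ⟨z, by rw [hw, h4]⟩

theorem treeAut.length_apply {X : Type*} {f : Equiv.Perm (List X)} (hf : f ∈ treeAut X)
    (v : List X) : (f v).length = v.length := by
  induction v using List.reverseRecOn with
  | nil => simp [hf.1]
  | append_singleton v x ih =>
      obtain ⟨y, hy⟩ := hf.2 v x
      simp [hy, ih]

/-- The section function: `sectFun f v w` is the word `u` with `f (v ++ w) = f v ++ u`. -/
def sectFun {X : Type*} (f : Equiv.Perm (List X)) (v w : List X) : List X :=
  (f (v ++ w)).drop v.length

theorem treeAut.apply_append {X : Type*} {f : Equiv.Perm (List X)} (hf : f ∈ treeAut X)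
    (v w : List X) : f (v ++ w) = f v ++ sectFun f v w := by
  have hpre : f v <+: f (v ++ w) := by
    induction w using List.reverseRecOn with
    | nil => simp
    | append_singleton w x ih =>
        obtain ⟨y, hy⟩ := hf.2 (v ++ w) x
        rw [← List.append_assoc, hy]
        exact ih.trans (List.prefix_append _ _)
  obtain ⟨t, ht⟩ := hpre
  have hd : sectFun f v w = t := by
    simp only [sectFun]
    rw [← ht, ← treeAut.length_apply hf v, List.drop_left]
  rw [hd, ht]

/-- The section of a tree automorphism `g` at a vertex `v`, as a tree automorphism. -/
def sect {X : Type*} (g : ↥(treeAut X)) (v : List X) : ↥(treeAut X) := by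
  refine ⟨{ toFun := sectFun (g : Equiv.Perm (List X)) v
            invFun := sectFun ((g : Equiv.Perm (List X))⁻¹) ((g : Equiv.Perm (List X)) v)
            left_inv := ?_
            right_inv := ?_ }, ?_, ?_⟩
  · intro w
    show sectFun _ _ (sectFun _ _ _) = w
    have ha := treeAut.apply_append g.2 v w
    simp only [sectFun] at ha ⊢
    rw [← ha, Equiv.Perm.inv_def, Equiv.symm_apply_apply, treeAut.length_apply g.2, List.drop_left]
  · intro w
    have hginv : (g : Equiv.Perm (List X))⁻¹ ∈ treeAut X := (treeAut X).inv_mem g.2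
    show sectFun _ _ (sectFun _ _ _) = w
    have key : (v : List X) ++ sectFun ((g : Equiv.Perm (List X))⁻¹) ((g : Equiv.Perm (List X)) v) w
        = (g : Equiv.Perm (List X))⁻¹ ((g : Equiv.Perm (List X)) v ++ w) := by
      have h1 := treeAut.apply_append hginv ((g : Equiv.Perm (List X)) v) w
      have h2 : (g : Equiv.Perm (List X))⁻¹ ((g : Equiv.Perm (List X)) v) = v := by simp
      rw [h1, h2]
    simp only [sectFun]
    simp only [sectFun] at key
    rw [key]
    simp [treeAut.length_apply g.2]
  · show sectFun _ _ [] = []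
    simp only [sectFun, List.append_nil]
    exact List.drop_eq_nil_of_le (le_of_eq (treeAut.length_apply g.2 v))
  · intro w x
    show ∃ y, sectFun _ _ (w ++ [x]) = sectFun _ _ w ++ [y]
    obtain ⟨y, hy⟩ := g.2.2 (v ++ w) x
    refine ⟨y, ?_⟩
    simp only [sectFun]
    rw [← List.append_assoc, hy, List.drop_append_of_le_length]
    rw [treeAut.length_apply g.2]
    simp

theorem sect_apply {X : Type*} (g : ↥(treeAut X)) (v w : List X) :
    ((sect g v : ↥(treeAut X)) : Equiv.Perm (List X)) w
      = sectFun (g : Equiv.Perm (List X)) v w := rfl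

theorem sect_nil {X : Type*} (g : ↥(treeAut X)) : sect g [] = g := by
  apply Subtype.ext
  apply Equiv.ext
  intro w
  rw [sect_apply]
  simp [sectFun]

theorem sect_append {X : Type*} (g : ↥(treeAut X)) (v u : List X) :
    sect g (v ++ u) = sect (sect g v) u := by
  apply Subtype.ext
  apply Equiv.ext
  intro w
  show sectFun (g : Equiv.Perm (List X)) (v ++ u) w
    = sectFun ((sect g v : ↥(treeAut X)) : Equiv.Perm (List X)) u w
  simp only [sectFun, sect_apply]
  rw [List.append_assoc, List.drop_drop, List.length_append, Nat.add_comm]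

theorem sect_one {X : Type*} (v : List X) : sect (1 : ↥(treeAut X)) v = 1 := by
  apply Subtype.ext
  apply Equiv.ext
  intro w
  rw [sect_apply]
  simp [sectFun]

theorem sect_mul {X : Type*} (g h : ↥(treeAut X)) (v : List X) :
    sect (g * h) v = sect g ((h : Equiv.Perm (List X)) v) * sect h v := by
  apply Subtype.ext
  apply Equiv.ext
  intro w
  show (((g * h : ↥(treeAut X)) : Equiv.Perm (List X)) (v ++ w)).drop v.length
      = ((g : Equiv.Perm (List X)) ((h : Equiv.Perm (List X)) v
          ++ sectFun (h : Equiv.Perm (List X)) v w)).drop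
            ((h : Equiv.Perm (List X)) v).length
  have hcoe : ((g * h : ↥(treeAut X)) : Equiv.Perm (List X)) (v ++ w)
      = (g : Equiv.Perm (List X)) ((h : Equiv.Perm (List X)) (v ++ w)) := rfl
  have hh := treeAut.apply_append h.2 v w
  rw [hcoe, hh, treeAut.length_apply h.2]

theorem sect_inv {X : Type*} (g : ↥(treeAut X)) (v : List X) :
    sect g⁻¹ v = (sect g (((g : Equiv.Perm (List X))⁻¹) v))⁻¹ := by
  have h1 : sect (g * g⁻¹) v = 1 := by rw [mul_inv_cancel, sect_one]
  have h2 := (sect_mul g g⁻¹ v).symm.trans h1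
  exact eq_inv_of_mul_eq_one_right h2

/-- The automorphism group of the finite subtree `X^[d]` of words of length at most `d`
is modelled inside the permutations of the set of such words. -/
abbrev Pat (X : Type*) (d : ℕ) := Equiv.Perm {l : List X // l.length ≤ d}

/-- The restriction homomorphism `Aut X* → Sym(X^[d])`. -/
def restr (X : Type*) (d : ℕ) : ↥(treeAut X) →* Pat X d where
  toFun g :=
    { toFun := fun w => ⟨(g : Equiv.Perm (List X)) w.1,
        by rw [treeAut.length_apply g.2]; exact w.2⟩
      invFun := fun w => ⟨(g : Equiv.Perm (List X))⁻¹ w.1,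
        by rw [treeAut.length_apply ((treeAut X).inv_mem g.2)]; exact w.2⟩
      left_inv := fun w => by
        apply Subtype.ext
        simp
      right_inv := fun w => by
        apply Subtype.ext
        simp }
  map_one' := by
    apply Equiv.ext
    intro w
    rfl
  map_mul' := fun g h => by
    apply Equiv.ext
    intro w
    rfl

/-- `Aut X^[d]`: the automorphism group of the finite tree `X^[d]`, realized as the
image of `Aut X*` under restriction (every automorphism of the finite tree extends). -/
def finAut (X : Type*) (d : ℕ) : Subgroup (Pat X d) := (restr X d).range

/-- The `n`-th level stabilizer in `Aut X*`: automorphisms fixing all words of length `≤ n`. -/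
def levelStab (X : Type*) (n : ℕ) : Subgroup ↥(treeAut X) := (restr X n).ker

/-- The self-similar group of finite type `G_P` given by a pattern group `P ≤ Aut X^[d]`:
all tree automorphisms all of whose sections restrict to elements of `P` on `X^[d]`. -/
def GP (X : Type*) (d : ℕ) (P : Subgroup (Pat X d)) : Subgroup ↥(treeAut X) where
  carrier := {g | ∀ v : List X, restr X d (sect g v) ∈ P}
  one_mem' := fun v => by rw [sect_one, map_one]; exact P.one_mem
  mul_mem' := fun {a b} ha hb v => by
    rw [sect_mul, map_mul]; exact P.mul_mem (ha _) (hb v)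
  inv_mem' := fun {a} ha v => by
    rw [sect_inv, map_inv]; exact P.inv_mem (ha _)

theorem mem_GP {X : Type*} {d : ℕ} {P : Subgroup (Pat X d)} (g : ↥(treeAut X)) :
    g ∈ GP X d P ↔ ∀ v : List X, restr X d (sect g v) ∈ P := Iff.rfl

/-- The edge relation `a →^x b` of the pattern graph `Γ_P`: the section of the pattern `a`
at the letter `x` agrees with the pattern `b` on `X^[d-1]`. -/
def patEdge (X : Type*) (d : ℕ) (a : Pat X d) (x : X) (b : Pat X d) : Prop :=
  ∀ (w : List X) (hw : w.length ≤ d - 1) (hw' : (x :: w).length ≤ d),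
    ((a ⟨x :: w, hw'⟩ : {l : List X // l.length ≤ d}) : List X).tail
      = ((b ⟨w, le_trans hw (Nat.sub_le d 1)⟩ : {l : List X // l.length ≤ d}) : List X)

/-- The subgroup of `Sym(X^[d])` of elements fixing all words of length at most `k`. -/
def patLevelStab (X : Type*) (d k : ℕ) : Subgroup (Pat X d) where
  carrier := {a | ∀ (w : List X) (hw : w.length ≤ d), w.length ≤ k → a ⟨w, hw⟩ = ⟨w, hw⟩}
  one_mem' := fun _ _ _ => rfl
  mul_mem' := fun {a b} ha hb w hw hk => by
    have h1 := hb w hw hk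
    have h2 := ha w hw hk
    show a (b ⟨w, hw⟩) = ⟨w, hw⟩
    rw [h1, h2]
  inv_mem' := fun {a} ha w hw hk => by
    have h1 := ha w hw hk
    have h2 : a⁻¹ (a ⟨w, hw⟩) = ⟨w, hw⟩ := by simp
    rwa [h1] at h2

/-- Level-transitivity: the group acts transitively on every level `X^n` of the tree. -/
def LevelTrans {X : Type*} (G : Subgroup ↥(treeAut X)) : Prop :=
  ∀ u v : List X, u.length = v.length → ∃ g ∈ G, (g : Equiv.Perm (List X)) u = v

/-- Topological finite generation of a closed subgroup `G ≤ Aut X*`, expressed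
concretely: some finite subset of `G` generates a subgroup which is dense in `G`
for the profinite (congruence) topology of `Aut X*`. -/
def TopFG {X : Type*} (G : Subgroup ↥(treeAut X)) : Prop :=
  ∃ S : Finset ↥(treeAut X), (S : Set ↥(treeAut X)) ⊆ (G : Set ↥(treeAut X)) ∧
    ∀ g ∈ G, ∀ n : ℕ, ∃ h ∈ Subgroup.closure (S : Set ↥(treeAut X)),
      ∀ w : List X, w.length ≤ n →
        (h : Equiv.Perm (List X)) w = (g : Equiv.Perm (List X)) w


/-- A pattern group `P` of depth `d` is minimal if every pattern group defining the same
self-similar group of finite type contains it. -/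
def IsMinimalPattern (X : Type*) (d : ℕ) (P : Subgroup (Pat X d)) : Prop :=
  ∀ Q : Subgroup (Pat X d), Q ≤ finAut X d → GP X d P = GP X d Q → P ≤ Q

/-- `Q = G_P|_(X^[d])` satisfies `Q ≤ P`, `G_Q = G_P`, and `Q` is minimal;
moreover it is the unique minimal pattern group of depth `d` defining `G_P`. -/
theorem statement8 {X : Type*} [Fintype X] [Nontrivial X] (d : ℕ) (hd : 1 ≤ d)
    (P : Subgroup (Pat X d)) (hP : P ≤ finAut X d) :
    Subgroup.map (restr X d) (GP X d P) ≤ P ∧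
    GP X d (Subgroup.map (restr X d) (GP X d P)) = GP X d P ∧
    IsMinimalPattern X d (Subgroup.map (restr X d) (GP X d P)) ∧
    ∀ R : Subgroup (Pat X d), R ≤ finAut X d → IsMinimalPattern X d R →
      GP X d R = GP X d P → R = Subgroup.map (restr X d) (GP X d P) := by
  set Q := Subgroup.map (restr X d) (GP X d P) with hQ
  -- sections of elements of GP stay in GP
  have hsect : ∀ g ∈ GP X d P, ∀ v : List X, sect g v ∈ GP X d P := by
    intro g hg v u
    rw [← sect_append]
    exact hg (v ++ u)
  have hQP : Q ≤ P := by
    rintro a ⟨g, hg, rfl⟩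
    have := hg []
    rwa [sect_nil] at this
  have hGPQ : GP X d Q = GP X d P := by
    apply _root_.le_antisymm
    · intro g hg v
      exact hQP (hg v)
    · intro g hg v
      exact ⟨sect g v, hsect g hg v, rfl⟩
  have hmin : IsMinimalPattern X d Q := by
    intro R _ hR
    rintro a ⟨g, hg, rfl⟩
    have hgR : g ∈ GP X d R := by
      rw [← hR, hGPQ]; exact hg
    have := hgR []
    rwa [sect_nil] at this
  refine ⟨hQP, hGPQ, hmin, ?_⟩
  intro R hRfin hRmin hRP
  have hQfin : Q ≤ finAut X d := by
    rintro a ⟨g, _, rfl⟩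
    exact ⟨g, rfl⟩
  apply _root_.le_antisymm
  · exact hRmin Q hQfin (by rw [hRP, hGPQ])
  · exact hmin R hRfin (by rw [hRP, hGPQ])
end

section
/- Let P be a minimal pattern group of depth d. The group G_P is finite if and only if the stabilizer St_P(d-1) is trivial, and in that case the restriction map g ↦ g|_{X^[d]} is an isomorphism from G_P onto P. -/
open List

/-! ### Auxiliary lemmas for statement10 -/

section Aux10

variable {X : Type*}

theorem restr_apply_val {d : ℕ} (g : ↥(treeAut X)) (w : {l : List X // l.length ≤ d}) :
    ((restr X d g w : {l : List X // l.length ≤ d}) : List X)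
      = (g : Equiv.Perm (List X)) w.1 := rfl

theorem sect_mem_GP {d : ℕ} {P : Subgroup (Pat X d)} {g : ↥(treeAut X)}
    (hg : g ∈ GP X d P) (v : List X) : sect g v ∈ GP X d P :=
  (mem_GP _).mpr fun u => by rw [← sect_append]; exact (mem_GP g).mp hg (v ++ u)

theorem restr_eq_one_fix {d : ℕ} {g : ↥(treeAut X)} (h1 : restr X d g = 1)
    (w : List X) (hw : w.length ≤ d) : (g : Equiv.Perm (List X)) w = w :=
  congrArg Subtype.val (Equiv.ext_iff.mp h1 ⟨w, hw⟩)

/-- If `St_P(d-1)` is trivial, then the restriction map is injective on `G_P`. -/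
theorem GP_restr_inj {d : ℕ} (hd : 1 ≤ d) {P : Subgroup (Pat X d)}
    (hbot : P ⊓ patLevelStab X d (d - 1) = ⊥) {g : ↥(treeAut X)} (hg : g ∈ GP X d P)
    (h1 : restr X d g = 1) : g = 1 := by
  have key : ∀ n : ℕ, ∀ g : ↥(treeAut X), g ∈ GP X d P → restr X d g = 1 →
      ∀ w : List X, w.length ≤ d + n → (g : Equiv.Perm (List X)) w = w := by
    intro n
    induction n with
    | zero =>
      intro g hg h1 w hw
      exact restr_eq_one_fix h1 w (by omega)
    | succ n ih =>
      intro g hg h1 w hw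
      match w with
      | [] => exact g.2.1
      | x :: w' =>
        have hs : sect g [x] ∈ GP X d P := sect_mem_GP hg [x]
        have hrs : restr X d (sect g [x]) = 1 := by
          have hmem : restr X d (sect g [x]) ∈ P ⊓ patLevelStab X d (d - 1) := by
            refine ⟨(mem_GP g).mp hg [x], ?_⟩
            intro u hu hk
            apply Subtype.ext
            show ((sect g [x] : ↥(treeAut X)) : Equiv.Perm (List X)) u = u
            rw [sect_apply]
            simp only [sectFun]
            have hfix : (g : Equiv.Perm (List X)) ([x] ++ u) = [x] ++ u :=
              restr_eq_one_fix h1 _ (by simp; omega)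
            rw [hfix]
            simp
          rw [hbot] at hmem
          exact Subgroup.mem_bot.mp hmem
        have hsw := ih (sect g [x]) hs hrs w' (by simp at hw; omega)
        rw [sect_apply] at hsw
        have hx : (g : Equiv.Perm (List X)) [x] = [x] := restr_eq_one_fix h1 [x] (by simpa)
        have := treeAut.apply_append g.2 [x] w'
        simp only [List.singleton_append] at this ⊢
        rw [this, hsw, hx]
        rfl
  apply Subtype.ext
  apply Equiv.ext
  intro w
  have := key w.length g hg h1 w (by omega)
  simpa using this

open Classical in
/-- Grafting `g` at the vertex `v`: acts as `g` on the subtree below `v`, identity elsewhere. -/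
noncomputable def graftFun (v : List X) (g : Equiv.Perm (List X)) (w : List X) : List X :=
  if v <+: w then v ++ g (w.drop v.length) else w

theorem graftFun_append (v : List X) (g : Equiv.Perm (List X)) (t : List X) :
    graftFun v g (v ++ t) = v ++ g t := by
  simp only [graftFun, if_pos (List.prefix_append v t), List.drop_left]

theorem graftFun_of_not_prefix (v : List X) (g : Equiv.Perm (List X)) {w : List X}
    (h : ¬ v <+: w) : graftFun v g w = w := by
  simp only [graftFun, if_neg h]

theorem graftFun_fix (v : List X) {g : Equiv.Perm (List X)} (hg : g ∈ treeAut X)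
    {u : List X} (hu : u.length ≤ v.length) : graftFun v g u = u := by
  by_cases h : v <+: u
  · have hvu : v = u := h.eq_of_length (le_antisymm h.length_le hu)
    subst hvu
    simp only [graftFun, if_pos List.prefix_rfl, List.drop_length, hg.1, List.append_nil]
  · exact graftFun_of_not_prefix v g h

/-- The grafted permutation. -/
noncomputable def graftEquiv (v : List X) (g : Equiv.Perm (List X)) : Equiv.Perm (List X) where
  toFun := graftFun v g
  invFun := graftFun v g⁻¹
  left_inv w := by
    by_cases h : v <+: w
    · obtain ⟨t, rfl⟩ := h
      rw [graftFun_append, graftFun_append]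
      simp
    · rw [graftFun_of_not_prefix v g h, graftFun_of_not_prefix v g⁻¹ h]
  right_inv w := by
    by_cases h : v <+: w
    · obtain ⟨t, rfl⟩ := h
      rw [graftFun_append, graftFun_append]
      simp
    · rw [graftFun_of_not_prefix v g⁻¹ h, graftFun_of_not_prefix v g h]

theorem graftEquiv_apply (v : List X) (g : Equiv.Perm (List X)) (w : List X) :
    graftEquiv v g w = graftFun v g w := rfl

theorem graft_mem (v : List X) {g : Equiv.Perm (List X)} (hg : g ∈ treeAut X) :
    graftEquiv v g ∈ treeAut X := by
  constructor
  · show graftFun v g [] = []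
    exact graftFun_fix v hg (by simp)
  · intro w x
    by_cases h : v <+: w
    · obtain ⟨t, rfl⟩ := h
      obtain ⟨y, hy⟩ := hg.2 t x
      refine ⟨y, ?_⟩
      show graftFun v g ((v ++ t) ++ [x]) = graftFun v g (v ++ t) ++ [y]
      rw [List.append_assoc, graftFun_append, graftFun_append, hy, List.append_assoc]
    · by_cases h2 : v <+: w ++ [x]
      · have hlen : ¬ v.length ≤ w.length := fun hl =>
          h (List.prefix_of_prefix_length_le h2 (List.prefix_append w [x]) hl)
        have hlen2 : v.length ≤ w.length + 1 := by simpa using h2.length_le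
        have hv : v = w ++ [x] := h2.eq_of_length (by simp; omega)
        refine ⟨x, ?_⟩
        show graftFun v g (w ++ [x]) = graftFun v g w ++ [x]
        rw [graftFun_of_not_prefix v g h, ← hv]
        have : graftFun v g v = v := graftFun_fix v hg le_rfl
        rw [this, hv]
      · exact ⟨x, by
          show graftFun v g (w ++ [x]) = graftFun v g w ++ [x]
          rw [graftFun_of_not_prefix v g h, graftFun_of_not_prefix v g h2]⟩

theorem sect_graft_append (v u : List X) (g : ↥(treeAut X)) :
    sect (⟨graftEquiv v (g : Equiv.Perm (List X)), graft_mem v g.2⟩ : ↥(treeAut X)) (v ++ u)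
      = sect g u := by
  apply Subtype.ext
  apply Equiv.ext
  intro w
  rw [sect_apply, sect_apply]
  simp only [sectFun]
  show (graftFun v (g : Equiv.Perm (List X)) ((v ++ u) ++ w)).drop (v ++ u).length
      = ((g : Equiv.Perm (List X)) (u ++ w)).drop u.length
  rw [List.append_assoc, graftFun_append, treeAut.apply_append g.2 u w]
  have h1 : (v ++ u).length = (v ++ (g : Equiv.Perm (List X)) u).length := by
    simp [treeAut.length_apply g.2]
  have h2 : u.length = ((g : Equiv.Perm (List X)) u).length :=
    (treeAut.length_apply g.2 u).symm
  rw [h1, h2, ← List.append_assoc, List.drop_left, List.drop_left]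

theorem restr_sect_graft_eq_one {d : ℕ} (v u : List X) (g : ↥(treeAut X))
    (hgfix : ∀ w : List X, w.length ≤ d - 1 → (g : Equiv.Perm (List X)) w = w)
    (hu : ¬ v <+: u) :
    restr X d (sect (⟨graftEquiv v (g : Equiv.Perm (List X)),
      graft_mem v g.2⟩ : ↥(treeAut X)) u) = 1 := by
  apply Equiv.ext
  rintro ⟨w, hw⟩
  apply Subtype.ext
  rw [restr_apply_val, sect_apply]
  simp only [sectFun]
  show (graftFun v (g : Equiv.Perm (List X)) (u ++ w)).drop u.length = w
  by_cases h2 : v <+: u ++ w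
  · have hlen : ¬ v.length ≤ u.length := fun hl =>
      hu (List.prefix_of_prefix_length_le h2 (List.prefix_append u w) hl)
    have huv : u <+: v :=
      List.prefix_of_prefix_length_le (List.prefix_append u w) h2 (by omega)
    obtain ⟨v', rfl⟩ := huv
    have hv' : v' ≠ [] := by rintro rfl; exact hu (by simp)
    have hv'pos : 0 < v'.length := List.length_pos_iff.mpr hv'
    obtain ⟨w'', rfl⟩ : v' <+: w := by
      obtain ⟨t, ht⟩ := h2
      rw [List.append_assoc] at ht
      exact ⟨t, List.append_cancel_left ht⟩
    rw [← List.append_assoc, graftFun_append]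
    have hfix : (g : Equiv.Perm (List X)) w'' = w'' := by
      apply hgfix
      simp only [List.length_append] at hw
      omega
    rw [hfix, List.append_assoc, List.drop_left]
  · rw [graftFun_of_not_prefix v _ h2, List.drop_left]

theorem graft_mem_GP {d : ℕ} {P : Subgroup (Pat X d)} {g : ↥(treeAut X)}
    (hg : g ∈ GP X d P)
    (hgfix : ∀ w : List X, w.length ≤ d - 1 → (g : Equiv.Perm (List X)) w = w)
    (v : List X) :
    (⟨graftEquiv v (g : Equiv.Perm (List X)), graft_mem v g.2⟩ : ↥(treeAut X)) ∈ GP X d P := by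
  refine (mem_GP _).mpr fun u => ?_
  by_cases h : v <+: u
  · obtain ⟨u', rfl⟩ := h
    rw [sect_graft_append]
    exact (mem_GP g).mp hg u'
  · rw [restr_sect_graft_eq_one v u g hgfix h]
    exact P.one_mem

end Aux10

/-- for a minimal pattern group `P` of depth `d`, the group `G_P` is finite
iff `St_P(d-1)` is trivial, and in that case restriction to `X^[d]` is an isomorphism
`G_P ≅ P`. -/
theorem statement10 {X : Type*} [Fintype X] [Nontrivial X] (d : ℕ) (hd : 1 ≤ d)
    (P : Subgroup (Pat X d)) (hP : P ≤ finAut X d)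
    (hmin : P = Subgroup.map (restr X d) (GP X d P)) :
    (Finite ↥(GP X d P) ↔ P ⊓ patLevelStab X d (d - 1) = ⊥) ∧
    (P ⊓ patLevelStab X d (d - 1) = ⊥ →
      ∃ e : ↥(GP X d P) ≃* ↥P, ∀ g : ↥(GP X d P),
        ((e g : ↥P) : Pat X d) = restr X d (g : ↥(treeAut X))) := by
  classical
  haveI hfinsub : Finite {l : List X // l.length ≤ d} := (List.finite_length_le X d).to_subtype
  haveI hfinP : Finite ↥P := Subtype.finite
  -- trivial stabilizer implies the isomorphism
  have key : P ⊓ patLevelStab X d (d - 1) = ⊥ →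
      ∃ e : ↥(GP X d P) ≃* ↥P, ∀ g : ↥(GP X d P),
        ((e g : ↥P) : Pat X d) = restr X d (g : ↥(treeAut X)) := by
    intro hbot
    have hφmem : ∀ g : ↥(GP X d P), restr X d (g : ↥(treeAut X)) ∈ P := by
      intro g
      have h := Subgroup.mem_map_of_mem (restr X d) g.2
      rwa [← hmin] at h
    let φ : ↥(GP X d P) →* ↥P :=
      { toFun := fun g => ⟨restr X d (g : ↥(treeAut X)), hφmem g⟩
        map_one' := Subtype.ext (map_one (restr X d))
        map_mul' := fun a b => Subtype.ext (map_mul (restr X d) a.1 b.1) }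
    have hinj : Function.Injective φ := by
      rw [injective_iff_map_eq_one]
      intro a ha
      have h1 : restr X d (a : ↥(treeAut X)) = 1 := congrArg Subtype.val ha
      exact Subtype.ext (GP_restr_inj hd hbot a.2 h1)
    have hsurj : Function.Surjective φ := by
      rintro ⟨p, hp⟩
      rw [hmin] at hp
      obtain ⟨g, hg, hgp⟩ := hp
      exact ⟨⟨g, hg⟩, Subtype.ext hgp⟩
    exact ⟨MulEquiv.ofBijective φ ⟨hinj, hsurj⟩, fun g => rfl⟩
  refine ⟨⟨?_, fun hbot => ?_⟩, key⟩
  · -- Finite → trivial stabilizer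
    intro hfin
    rw [Subgroup.eq_bot_iff_forall]
    intro a ha
    by_contra hane
    obtain ⟨haP, haS⟩ := Subgroup.mem_inf.mp ha
    have haP' : a ∈ Subgroup.map (restr X d) (GP X d P) := hmin ▸ haP
    obtain ⟨g₀, hg₀, hga⟩ := haP'
    have hgfix : ∀ w : List X, w.length ≤ d - 1 → (g₀ : Equiv.Perm (List X)) w = w := by
      intro w hw
      have hwd : w.length ≤ d := le_trans hw (Nat.sub_le d 1)
      have h1 : restr X d g₀ ⟨w, hwd⟩ = ⟨w, hwd⟩ := by
        rw [hga]; exact haS w hwd hw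
      exact congrArg Subtype.val h1
    obtain ⟨p, hp⟩ : ∃ p : {l : List X // l.length ≤ d}, a p ≠ p := by
      by_contra hall
      push_neg at hall
      exact hane (Equiv.ext hall)
    have hgp : (g₀ : Equiv.Perm (List X)) p.1 ≠ p.1 := by
      intro h
      apply hp
      rw [← hga]
      exact Subtype.ext h
    obtain ⟨x₀⟩ : Nonempty X := inferInstance
    let F : ℕ → ↥(GP X d P) := fun n =>
      ⟨⟨graftEquiv (List.replicate (n * (d + 1)) x₀) (g₀ : Equiv.Perm (List X)),
          graft_mem _ g₀.2⟩, graft_mem_GP hg₀ hgfix _⟩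
    have claim : ∀ m n : ℕ, m < n → F m ≠ F n := by
      intro m n hmn heq
      set q := List.replicate (m * (d + 1)) x₀ ++ p.1 with hq
      have h1 : ((F m : ↥(treeAut X)) : Equiv.Perm (List X)) q ≠ q := by
        show graftEquiv _ _ q ≠ q
        rw [graftEquiv_apply, hq, graftFun_append]
        intro h
        exact hgp (List.append_cancel_left h)
      have h2 : ((F n : ↥(treeAut X)) : Equiv.Perm (List X)) q = q := by
        show graftFun _ _ q = q
        apply graftFun_fix _ g₀.2
        have hpd : p.1.length ≤ d := p.2
        have hmul : (m + 1) * (d + 1) ≤ n * (d + 1) :=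
          Nat.mul_le_mul_right (d + 1) hmn
        simp only [hq, List.length_append, List.length_replicate]
        have : (m + 1) * (d + 1) = m * (d + 1) + (d + 1) := by ring
        omega
      rw [heq] at h1
      exact h1 h2
    obtain ⟨m, n, hmn, hFeq⟩ := Finite.exists_ne_map_eq_of_infinite F
    rcases lt_trichotomy m n with h | h | h
    · exact claim m n h hFeq
    · exact hmn h
    · exact claim n m h hFeq.symm
  · -- trivial stabilizer → Finite
    obtain ⟨e, _⟩ := key hbot
    exact Finite.of_equiv ↥P e.symm.toEquiv
end

section
/- In the pattern graph Γ_P of a minimal pattern group P with m = |St_P(d-1)|, every vertex has exactly m outgoing edges labeled by x, for every letter x ∈ X. -/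
open List

/-- in the pattern graph of a minimal pattern group `P` with
`m = |St_P(d-1)|`, every vertex `a ∈ P` has exactly `m` outgoing edges labeled by `x`,
for every letter `x`. -/
theorem statement11 {X : Type*} [Fintype X] [Nontrivial X] (d : ℕ) (hd : 1 ≤ d)
    (P : Subgroup (Pat X d)) (hP : P ≤ finAut X d)
    (hmin : P = Subgroup.map (restr X d) (GP X d P))
    (a : Pat X d) (ha : a ∈ P) (x : X) :
    Nat.card {b : Pat X d // b ∈ P ∧ patEdge X d a x b}
      = Nat.card ↥(P ⊓ patLevelStab X d (d - 1)) := by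
  -- obtain a preimage g of a in G_P
  have ha' := ha
  rw [hmin] at ha'
  obtain ⟨g, hg, hga⟩ := ha'
  set b₀ : Pat X d := restr X d (sect g [x]) with hb₀def
  have hb₀P : b₀ ∈ P := hg [x]
  -- basic computation: values of restr
  have hrestr : ∀ (h : ↥(treeAut X)) (w : List X) (hw : w.length ≤ d),
      ((restr X d h ⟨w, hw⟩ : {l : List X // l.length ≤ d}) : List X)
        = (h : Equiv.Perm (List X)) w := fun _ _ _ => rfl
  -- b₀ is an out-neighbor of a labeled x
  have hedge₀ : patEdge X d a x b₀ := by
    intro w hw hw'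
    rw [← hga]
    rw [hrestr, hrestr]
    have hx : (x :: w) = [x] ++ w := rfl
    rw [hx, treeAut.apply_append g.2 [x] w]
    have hlen : ((g : Equiv.Perm (List X)) [x]).length = 1 :=
      treeAut.length_apply g.2 [x]
    obtain ⟨y, hy⟩ := List.length_eq_one_iff.mp hlen
    rw [hy, sect_apply]
    rfl
  -- any two out-neighbors agree on words of length ≤ d-1
  have hagree : ∀ b, patEdge X d a x b → ∀ (w : List X) (hw : w.length ≤ d)
      (hk : w.length ≤ d - 1), b ⟨w, hw⟩ = b₀ ⟨w, hw⟩ := by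
    intro b hb w hw hk
    have hw' : (x :: w).length ≤ d := by
      simp only [List.length_cons]
      omega
    have h1 := hb w hk hw'
    have h2 := hedge₀ w hk hw'
    apply Subtype.ext
    have e1 : b ⟨w, le_trans hk (Nat.sub_le d 1)⟩ = b ⟨w, hw⟩ := rfl
    have e2 : b₀ ⟨w, le_trans hk (Nat.sub_le d 1)⟩ = b₀ ⟨w, hw⟩ := rfl
    rw [e1] at h1
    rw [e2] at h2
    rw [← h1, ← h2]
  apply Nat.card_congr
  refine
    { toFun := fun b => ⟨b₀⁻¹ * b.1, ?_⟩
      invFun := fun c => ⟨b₀ * c.1, ?_, ?_⟩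
      left_inv := ?_
      right_inv := ?_ }
  · rcases b with ⟨b, hbP, hbe⟩
    rw [Subgroup.mem_inf]
    refine ⟨P.mul_mem (P.inv_mem hb₀P) hbP, ?_⟩
    intro w hw hk
    show b₀⁻¹ (b ⟨w, hw⟩) = ⟨w, hw⟩
    rw [hagree b hbe w hw hk]
    simp
  · exact P.mul_mem hb₀P ((Subgroup.mem_inf.mp c.2).1)
  · intro w hw hw'
    have hk : w.length ≤ d - 1 := hw
    have hwd : w.length ≤ d := le_trans hw (Nat.sub_le d 1)
    have hc := (Subgroup.mem_inf.mp c.2).2 w hwd hk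
    have e3 : (b₀ * c.1) ⟨w, hwd⟩ = b₀ (c.1 ⟨w, hwd⟩) := rfl
    rw [e3, hc]
    exact hedge₀ w hw hw'
  · rintro ⟨b, hbP, hbe⟩
    apply Subtype.ext
    show b₀ * (b₀⁻¹ * b) = b
    group
  · rintro ⟨c, hc⟩
    apply Subtype.ext
    show b₀⁻¹ * (b₀ * c) = c
    group
end

section
/- Let G_P be a self-similar group of finite type given by a pattern group of depth d. For every h ∈ St_{G_P}(d-1) and every vertex v ∈ X*, the unique automorphism g of X* that fixes all vertices outside vX* and has section g_{(v)} = h belongs to G_P. -/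
open List

/-- for `h ∈ St_(G_P)(d-1)` and a vertex `v`, the automorphism fixing
everything outside the subtree `vX*` and acting as `h` at `v` belongs to `G_P`. -/
theorem statement13 {X : Type*} [Fintype X] [Nontrivial X] (d : ℕ) (hd : 1 ≤ d)
    (P : Subgroup (Pat X d)) (hP : P ≤ finAut X d)
    (h g : ↥(treeAut X)) (hh : h ∈ GP X d P)
    (hst : ∀ w : List X, w.length ≤ d - 1 → (h : Equiv.Perm (List X)) w = w)
    (v : List X)
    (hg1 : ∀ u : List X, ¬ v <+: u → (g : Equiv.Perm (List X)) u = u)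
    (hg2 : sect g v = h) :
    g ∈ GP X d P := by
  -- first: g fixes v
  have gv : (g : Equiv.Perm (List X)) v = v := by
    rcases List.eq_nil_or_concat v with rfl | ⟨p, x, hv⟩
    · exact g.2.1
    · rw [List.concat_eq_append] at hv
      subst hv
      have hp : (g : Equiv.Perm (List X)) p = p := by
        apply hg1
        intro hpre
        have := hpre.length_le
        simp at this
      obtain ⟨y, hy⟩ := g.2.2 p x
      rw [hp] at hy
      by_cases hxy : y = x
      · rw [hxy] at hy; exact hy
      · exfalso
        have hu' : (g : Equiv.Perm (List X)) (p ++ [y]) = p ++ [y] := by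
          apply hg1
          intro hpre
          have heq := hpre.eq_of_length (by simp)
          have := (List.append_inj' heq rfl).2
          simp at this
          exact hxy this.symm
        have hinj := (g : Equiv.Perm (List X)).injective (hy.trans hu'.symm)
        have := (List.append_inj' hinj rfl).2
        simp at this
        exact hxy this.symm
  intro u
  by_cases hvu : v <+: u
  · obtain ⟨t, rfl⟩ := hvu
    rw [sect_append, hg2]
    exact hh t
  · -- g acts as identity on u ++ w for all |w| ≤ d
    have key : ∀ w : List X, w.length ≤ d → (g : Equiv.Perm (List X)) (u ++ w) = u ++ w := by
      intro w hw
      by_cases hv2 : v <+: u ++ w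
      · have huv : u <+: v := by
          rcases List.prefix_or_prefix_of_prefix (List.prefix_append u w) hv2 with h1 | h1
          · exact h1
          · exact absurd h1 hvu
        obtain ⟨s, rfl⟩ := huv
        have hsw : s <+: w := by
          obtain ⟨t, ht⟩ := hv2
          rw [List.append_assoc] at ht
          exact ⟨t, List.append_cancel_left ht⟩
        obtain ⟨w', rfl⟩ := hsw
        have hs : s ≠ [] := by
          rintro rfl
          exact hvu (by simpa using List.prefix_append u w')
        have hw' : w'.length ≤ d - 1 := by
          have hs1 : 1 ≤ s.length := Nat.one_le_iff_ne_zero.mpr (by simpa using hs)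
          have : s.length + w'.length ≤ d := by simpa using hw
          omega
        calc (g : Equiv.Perm (List X)) (u ++ (s ++ w'))
            = (g : Equiv.Perm (List X)) ((u ++ s) ++ w') := by rw [List.append_assoc]
          _ = (g : Equiv.Perm (List X)) (u ++ s) ++ sectFun (g : Equiv.Perm (List X)) (u ++ s) w' :=
              treeAut.apply_append g.2 _ _
          _ = (u ++ s) ++ (h : Equiv.Perm (List X)) w' := by
              rw [gv, ← sect_apply, hg2]
          _ = (u ++ s) ++ w' := by rw [hst w' hw']
          _ = u ++ (s ++ w') := by rw [List.append_assoc]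
      · exact hg1 _ hv2
    have hone : restr X d (sect g u) = 1 := by
      apply Equiv.ext
      rintro ⟨w, hw⟩
      apply Subtype.ext
      show ((sect g u : ↥(treeAut X)) : Equiv.Perm (List X)) w = w
      rw [sect_apply]
      simp only [sectFun]
      rw [key w hw, List.drop_left]
    rw [hone]
    exact P.one_mem
end
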